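/- Assume the flatness hypothesis (Flat) with constant c_ν > 0. Let x₁, x₂, y ∈ Γ with x₁ ≠ y and 2‖x₁ − x₂‖ ≤ ‖x₁ − y‖ (so x₂ ≠ y). Then |ν(y)·(x₂−y)| · |ν(x₂)·(x₂−y)| · |‖x₁−y‖⁻⁵ − ‖x₂−y‖⁻⁵| ≤ 1620 c_ν² ‖x₁ − x₂‖ / ‖x₁ − y‖². -/

import Mathlib

open scoped RealInnerProductSpace

theorem kernel_second_summand_tail_difference_bound
    (Γ : Set (EuclideanSpace ℝ (Fin 3)))
    (ν : EuclideanSpace ℝ (Fin 3) → EuclideanSpace ℝ (Fin 3))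
    (c_ν : ℝ) (hc : 0 < c_ν)
    (hFlat : ∀ x ∈ Γ, ∀ y ∈ Γ,
      |⟪ν x, x - y⟫| ≤ c_ν * ‖x - y‖ ^ 2 ∧ |⟪ν y, x - y⟫| ≤ c_ν * ‖x - y‖ ^ 2)
    (x₁ x₂ y : EuclideanSpace ℝ (Fin 3))
    (hx₁ : x₁ ∈ Γ) (hx₂ : x₂ ∈ Γ) (hy : y ∈ Γ)
    (hx₁y : x₁ ≠ y)
    (h : 2 * ‖x₁ - x₂‖ ≤ ‖x₁ - y‖) :
    |⟪ν y, x₂ - y⟫| * |⟪ν x₂, x₂ - y⟫| * |(‖x₁ - y‖ ^ 5)⁻¹ - (‖x₂ - y‖ ^ 5)⁻¹|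
      ≤ 1620 * c_ν ^ 2 * ‖x₁ - x₂‖ / ‖x₁ - y‖ ^ 2 := by
  set a := ‖x₁ - y‖ with ha_def
  set b := ‖x₂ - y‖ with hb_def
  set d := ‖x₁ - x₂‖ with hd_def
  have ha : 0 < a := norm_pos_iff.mpr (sub_ne_zero.mpr hx₁y)
  have hd0 : 0 ≤ d := norm_nonneg _
  have habd : |a - b| ≤ d := by
    have := abs_norm_sub_norm_le (x₁ - y) (x₂ - y)
    simpa [ha_def, hb_def, hd_def, sub_sub_sub_cancel_right] using this
  have hda : d ≤ a / 2 := by linarith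
  have hb_lo : a / 2 ≤ b := by
    have := abs_le.mp habd
    linarith [this.1, this.2]
  have hb_hi : b ≤ 3 / 2 * a := by
    have := abs_le.mp habd
    linarith [this.1, this.2]
  have hb : 0 < b := by linarith
  have h1 : |⟪ν y, x₂ - y⟫| ≤ c_ν * b ^ 2 := (hFlat x₂ hx₂ y hy).2
  have h2 : |⟪ν x₂, x₂ - y⟫| ≤ c_ν * b ^ 2 := (hFlat x₂ hx₂ y hy).1
  -- key estimate on the power difference
  have hfac : b ^ 5 - a ^ 5
      = (b - a) * (b ^ 4 + b ^ 3 * a + b ^ 2 * a ^ 2 + b * a ^ 3 + a ^ 4) := by ring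
  have hSnn : 0 ≤ b ^ 4 + b ^ 3 * a + b ^ 2 * a ^ 2 + b * a ^ 3 + a ^ 4 := by positivity
  have hS : b ^ 4 + b ^ 3 * a + b ^ 2 * a ^ 2 + b * a ^ 3 + a ^ 4 ≤ 810 * a ^ 4 := by
    nlinarith [pow_le_pow_left₀ hb.le hb_hi 4, pow_pos ha 4,
      mul_le_mul_of_nonneg_right (pow_le_pow_left₀ hb.le hb_hi 3) ha.le,
      mul_le_mul_of_nonneg_right (pow_le_pow_left₀ hb.le hb_hi 2) (pow_pos ha 2).le,
      mul_le_mul_of_nonneg_right hb_hi (pow_pos ha 3).le]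
  have hkey : |b ^ 5 - a ^ 5| ≤ 810 * d * a ^ 4 := by
    rw [hfac, abs_mul, abs_of_nonneg hSnn]
    have h1' : |b - a| ≤ d := by rwa [abs_sub_comm] at habd
    calc |b - a| * (b ^ 4 + b ^ 3 * a + b ^ 2 * a ^ 2 + b * a ^ 3 + a ^ 4)
        ≤ d * (810 * a ^ 4) := mul_le_mul h1' hS hSnn hd0
      _ = 810 * d * a ^ 4 := by ring
  have hT : |(a ^ 5)⁻¹ - (b ^ 5)⁻¹| = |b ^ 5 - a ^ 5| / (a ^ 5 * b ^ 5) := by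
    rw [inv_sub_inv (by positivity) (by positivity), abs_div,
      abs_of_pos (by positivity : (0:ℝ) < a ^ 5 * b ^ 5)]
  have hTb : |(a ^ 5)⁻¹ - (b ^ 5)⁻¹| ≤ 810 * d * a ^ 4 / (a ^ 5 * b ^ 5) := by
    rw [hT]
    gcongr
  have hstep : |⟪ν y, x₂ - y⟫| * |⟪ν x₂, x₂ - y⟫| * |(a ^ 5)⁻¹ - (b ^ 5)⁻¹|
      ≤ (c_ν * b ^ 2) * (c_ν * b ^ 2) * (810 * d * a ^ 4 / (a ^ 5 * b ^ 5)) := by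
    exact mul_le_mul (mul_le_mul h1 h2 (abs_nonneg _) (by positivity)) hTb
      (abs_nonneg _) (by positivity)
  refine hstep.trans ?_
  have heq : c_ν * b ^ 2 * (c_ν * b ^ 2) * (810 * d * a ^ 4 / (a ^ 5 * b ^ 5))
      = 810 * c_ν ^ 2 * d / (a * b) := by
    field_simp
  rw [heq]
  rw [div_le_div_iff₀ (by positivity) (by positivity)]
  have hba : a ≤ 2 * b := by linarith
  nlinarith [mul_le_mul_of_nonneg_left hba
    (mul_nonneg (mul_nonneg hd0 (sq_nonneg c_ν)) ha.le)]
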